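/- Let t be the Thue-Morse sequence and let x, z, j, m be nonnegative integers with z < 2^m and n ≥ 1 an integer, and suppose ⌊n·z / 2^m⌋ = j. If s₁(·) denotes the number of 1s in the binary expansion, then s₁(n·(x·2^m + z)) = s₁(n·x + j) + s₁(n·z mod 2^m), and consequently t(n·(x·2^m + z)) = t(n·x + j) XOR t(n·z mod 2^m). -/

import Mathlib

/-- The number of 1s in the binary expansion. -/
def s₁ (i : ℕ) : ℕ := (Nat.digits 2 i).count 1

/-- The Thue-Morse sequence: number of 1s in the binary expansion, mod 2. -/
def thueMorse (i : ℕ) : ℕ := s₁ i % 2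

lemma s₁_split (a b m : ℕ) (hb : b < 2 ^ m) : s₁ (a * 2 ^ m + b) = s₁ a + s₁ b := by
  rcases Nat.eq_zero_or_pos a with rfl | ha
  · simp [s₁]
  have hlen : (Nat.digits 2 b).length ≤ m := by
    rcases Nat.eq_zero_or_pos b with rfl | hb0
    · simp
    · rw [Nat.digits_len 2 b one_lt_two hb0.ne']
      exact Nat.log_lt_of_lt_pow hb0.ne' hb
  have key := Nat.digits_append_zeroes_append_digits
    (b := 2) (k := m - (Nat.digits 2 b).length) (m := a) (n := b) one_lt_two ha
  rw [Nat.add_sub_cancel' hlen] at key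
  have : a * 2 ^ m + b = b + 2 ^ m * a := by ring
  rw [s₁, this, ← key]
  simp [s₁, List.count_append, List.count_replicate]
  ring

theorem thueMorse_split (n x z j m : ℕ) (hn : 1 ≤ n) (hz : z < 2 ^ m)
    (hj : n * z / 2 ^ m = j) :
    s₁ (n * (x * 2 ^ m + z)) = s₁ (n * x + j) + s₁ (n * z % 2 ^ m) ∧
    thueMorse (n * (x * 2 ^ m + z)) =
      (thueMorse (n * x + j) + thueMorse (n * z % 2 ^ m)) % 2 := by
  have hrw : n * (x * 2 ^ m + z) = (n * x + j) * 2 ^ m + n * z % 2 ^ m := by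
    have := Nat.div_add_mod (n * z) (2 ^ m)
    rw [hj] at this
    calc n * (x * 2 ^ m + z) = n * x * 2 ^ m + n * z := by ring
      _ = n * x * 2 ^ m + (2 ^ m * j + n * z % 2 ^ m) := by rw [this]
      _ = (n * x + j) * 2 ^ m + n * z % 2 ^ m := by ring
  have h1 : s₁ (n * (x * 2 ^ m + z)) = s₁ (n * x + j) + s₁ (n * z % 2 ^ m) := by
    rw [hrw]
    exact s₁_split _ _ _ (Nat.mod_lt _ (Nat.pow_pos two_pos))
  exact ⟨h1, by simp [thueMorse, h1, Nat.add_mod]⟩
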